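/- Let μ₂ be a measure on ℝ³ assigning finite mass to every set pq (lines crossing segment from p to q), such that μ₂ assigns zero mass to the set of lines passing through any fixed point. Then for all a,b in ℝ², μ₂(oa ∩ ob) = ½(μ₂(oa) + μ₂(ob) − μ₂(ab)), where o is the origin of ℝ². -/

import Mathlib

open Set MeasureTheory

noncomputable section

/-- The line `ℓ(x,v) = {(x+vt, t) : t ∈ ℝ}` in the space-time plane. -/
def lineSet (x v : ℝ) : Set (ℝ × ℝ) := {p | p.1 = x + v * p.2}

/-- The set `pq ⊆ ℝ³` of `(x,v,r)` whose line `ℓ(x,v)` meets segment `pq`. -/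
def cross3 (p q : ℝ × ℝ) : Set (ℝ × ℝ × ℝ) :=
  {z | (lineSet z.1 z.2.1 ∩ segment ℝ p q).Nonempty}

/-- The set of `(x,v,r)` whose line passes through the point `p`. -/
def through3 (p : ℝ × ℝ) : Set (ℝ × ℝ × ℝ) := {z | p ∈ lineSet z.1 z.2.1}


/-- signed affine functional -/
def g3 (z : ℝ × ℝ × ℝ) (p : ℝ × ℝ) : ℝ := p.1 - z.1 - z.2.1 * p.2

lemma mem_through3 (z : ℝ × ℝ × ℝ) (p : ℝ × ℝ) : z ∈ through3 p ↔ g3 z p = 0 := by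
  simp only [through3, lineSet, mem_setOf_eq, g3]
  constructor <;> intro h <;> linarith

lemma mem_cross3 (z : ℝ × ℝ × ℝ) (p q : ℝ × ℝ) :
    z ∈ cross3 p q ↔ g3 z p * g3 z q ≤ 0 := by
  constructor
  · rintro ⟨c, hc1, hc2⟩
    rw [segment_eq_image] at hc2
    obtain ⟨θ, ⟨hθ0, hθ1⟩, rfl⟩ := hc2
    simp only [lineSet, mem_setOf_eq, Prod.fst_add, Prod.snd_add, Prod.smul_fst,
      Prod.smul_snd, smul_eq_mul] at hc1
    have key : (1 - θ) * g3 z p + θ * g3 z q = 0 := by simp only [g3]; ring_nf; nlinarith [hc1]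
    rcases eq_or_lt_of_le hθ0 with h | h
    · have hp : g3 z p = 0 := by rw [← h] at key; linarith
      simp [hp]
    · have h2 : θ * g3 z q = -((1 - θ) * g3 z p) := by linarith
      have h3 : θ * (g3 z p * g3 z q) = -((1 - θ) * g3 z p ^ 2) := by
        calc θ * (g3 z p * g3 z q) = g3 z p * (θ * g3 z q) := by ring
        _ = -((1 - θ) * g3 z p ^ 2) := by rw [h2]; ring
      nlinarith [sq_nonneg (g3 z p)]
  · intro h
    by_cases hp : g3 z p = 0
    · exact ⟨p, by simp only [lineSet, mem_setOf_eq, g3] at hp ⊢; linarith, left_mem_segment ℝ p q⟩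
    · have hne : g3 z p - g3 z q ≠ 0 := by
        intro he
        have : g3 z p = g3 z q := by linarith
        rw [← this] at h
        exact hp (mul_self_eq_zero.mp (le_antisymm h (mul_self_nonneg _)))
      set θ := g3 z p / (g3 z p - g3 z q) with hθdef
      have hθ0 : 0 ≤ θ := by
        rcases lt_or_gt_of_ne hp with h1 | h1
        · have hq : 0 ≤ g3 z q := by nlinarith
          exact div_nonneg_iff.mpr (Or.inr ⟨le_of_lt h1, by linarith⟩)
        · have hq : g3 z q ≤ 0 := by nlinarith
          apply div_nonneg (le_of_lt h1); linarith
      have hθ1 : θ ≤ 1 := by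
        rcases lt_or_gt_of_ne hp with h1 | h1
        · have hq : 0 ≤ g3 z q := by nlinarith
          rw [hθdef, div_le_one_iff]
          exact Or.inr (Or.inr ⟨by linarith, by linarith⟩)
        · have hq : g3 z q ≤ 0 := by nlinarith
          rw [hθdef, div_le_one_iff]
          exact Or.inl ⟨by linarith, by linarith⟩
      refine ⟨(1 - θ) • p + θ • q, ?_, ?_⟩
      · simp only [lineSet, mem_setOf_eq, Prod.fst_add, Prod.snd_add, Prod.smul_fst,
          Prod.smul_snd, smul_eq_mul]
        have key : (1 - θ) * g3 z p + θ * g3 z q = 0 := by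
          field_simp [hθdef]
          have hθm : θ * (g3 z p - g3 z q) = g3 z p := by rw [hθdef]; exact div_mul_cancel₀ _ hne
          linear_combination (-1 : ℝ) * hθm
        simp only [g3] at key
        linarith [key]
      · rw [segment_eq_image]
        exact ⟨θ, ⟨hθ0, hθ1⟩, rfl⟩

lemma measurableSet_cross3 (p q : ℝ × ℝ) : MeasurableSet (cross3 p q) := by
  have : cross3 p q = {z : ℝ × ℝ × ℝ | g3 z p * g3 z q ≤ 0} :=
    Set.ext fun z => mem_cross3 z p q
  rw [this]
  apply measurableSet_le _ measurable_const
  unfold g3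
  fun_prop

lemma sign_helper {x y z : ℝ} (hx : x ≠ 0) (hy : y ≠ 0) (hz : z ≠ 0) :
    y * z ≤ 0 ↔ ((x * y ≤ 0 ∧ ¬ x * z ≤ 0) ∨ (x * z ≤ 0 ∧ ¬ x * y ≤ 0)) := by
  rcases hx.lt_or_gt with hx | hx <;> rcases hy.lt_or_gt with hy | hy <;>
    rcases hz.lt_or_gt with hz | hz <;>
    simp only [not_le] <;>
    constructor <;> intro h <;>
    first
      | nlinarith
      | (left; constructor <;> nlinarith)
      | (right; constructor <;> nlinarith)
      | (exfalso; rcases h with ⟨h1, h2⟩ | ⟨h1, h2⟩ <;> nlinarith)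


/-- `μ₂(oa ∩ ob) = ½(μ₂(oa) + μ₂(ob) − μ₂(ab))`, for a measure finite on
all sets `pq` and null on lines through any fixed point; `o` is the origin. -/
theorem statement3 (ν : Measure (ℝ × ℝ × ℝ))
    (hfin : ∀ p q : ℝ × ℝ, ν (cross3 p q) < ⊤)
    (hnull : ∀ p : ℝ × ℝ, ν (through3 p) = 0) :
    ∀ a b : ℝ × ℝ,
      (ν (cross3 0 a ∩ cross3 0 b)).toReal =
        (1 / 2) * ((ν (cross3 0 a)).toReal + (ν (cross3 0 b)).toReal
          - (ν (cross3 a b)).toReal) := by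
  intro a b
  set A := cross3 0 a with hA
  set B := cross3 0 b with hB
  set C := cross3 a b with hC
  set N : Set (ℝ × ℝ × ℝ) := through3 0 ∪ through3 a ∪ through3 b with hNdef
  have mA : MeasurableSet A := measurableSet_cross3 0 a
  have mB : MeasurableSet B := measurableSet_cross3 0 b
  have hN : ν N = 0 :=
    measure_union_null (measure_union_null (hnull 0) (hnull a)) (hnull b)
  -- symmetric difference identity off N
  have hdiffeq : C \ N = ((A \ B) ∪ (B \ A)) \ N := by
    ext z
    simp only [mem_diff, hNdef, mem_union, not_or, mem_diff]
    constructor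
    · rintro ⟨hz, ⟨hn0, hna⟩, hnb⟩
      refine ⟨?_, ⟨hn0, hna⟩, hnb⟩
      rw [hC, mem_cross3] at hz
      rw [mem_through3] at hn0 hna hnb
      have := (sign_helper hn0 hna hnb).mp hz
      rcases this with ⟨h1, h2⟩ | ⟨h1, h2⟩
      · exact Or.inl ⟨(mem_cross3 z 0 a).mpr (by simpa [g3] using h1),
          fun hzb => h2 (by simpa [g3] using (mem_cross3 z 0 b).mp hzb)⟩
      · exact Or.inr ⟨(mem_cross3 z 0 b).mpr (by simpa [g3] using h1),
          fun hza => h2 (by simpa [g3] using (mem_cross3 z 0 a).mp hza)⟩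
    · rintro ⟨hz, ⟨hn0, hna⟩, hnb⟩
      refine ⟨?_, ⟨hn0, hna⟩, hnb⟩
      rw [mem_through3] at hn0 hna hnb
      rw [hC, mem_cross3]
      apply (sign_helper hn0 hna hnb).mpr
      rcases hz with ⟨h1, h2⟩ | ⟨h1, h2⟩
      · exact Or.inl ⟨by simpa [g3] using (mem_cross3 z 0 a).mp h1,
          fun hc => h2 ((mem_cross3 z 0 b).mpr (by simpa [g3] using hc))⟩
      · exact Or.inr ⟨by simpa [g3] using (mem_cross3 z 0 b).mp h1,
          fun hc => h2 ((mem_cross3 z 0 a).mpr (by simpa [g3] using hc))⟩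
  have hCeq : ν C = ν ((A \ B) ∪ (B \ A)) := by
    calc ν C = ν (C \ N) := (measure_diff_null hN).symm
      _ = ν (((A \ B) ∪ (B \ A)) \ N) := by rw [hdiffeq]
      _ = ν ((A \ B) ∪ (B \ A)) := measure_diff_null hN
  have hadd : ν ((A \ B) ∪ (B \ A)) = ν (A \ B) + ν (B \ A) :=
    measure_union disjoint_sdiff_sdiff (mB.diff mA)
  have h1 : ν (A ∩ B) + ν (A \ B) = ν A := measure_inter_add_diff A mB
  have h2 : ν (B ∩ A) + ν (B \ A) = ν B := measure_inter_add_diff B mA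
  -- finiteness
  have fA : ν A ≠ ⊤ := (hfin 0 a).ne
  have fB : ν B ≠ ⊤ := (hfin 0 b).ne
  have fC : ν C ≠ ⊤ := (hfin a b).ne
  have fAB : ν (A ∩ B) ≠ ⊤ := ((measure_mono inter_subset_left).trans_lt (hfin 0 a)).ne
  have fAdB : ν (A \ B) ≠ ⊤ := ((measure_mono diff_subset).trans_lt (hfin 0 a)).ne
  have fBdA : ν (B \ A) ≠ ⊤ := ((measure_mono diff_subset).trans_lt (hfin 0 b)).ne
  -- pass to reals
  have r1 : (ν (A ∩ B)).toReal + (ν (A \ B)).toReal = (ν A).toReal := by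
    rw [← ENNReal.toReal_add fAB fAdB, h1]
  have r2 : (ν (A ∩ B)).toReal + (ν (B \ A)).toReal = (ν B).toReal := by
    rw [← ENNReal.toReal_add fAB fBdA, inter_comm A B, h2]
  have r3 : (ν C).toReal = (ν (A \ B)).toReal + (ν (B \ A)).toReal := by
    rw [hCeq, hadd, ENNReal.toReal_add fAdB fBdA]
  linarith

end
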